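/- Let M be a finite matroid with linearly ordered ground set E, B a base of M with e ∉ B where e is not a loop, and C = ci(e,B) the fundamental circuit. Then for every b ∈ B∖(C∖{e}), the fundamental bond of b with respect to the base B∖(C∖{e}) of the contraction M/C equals the fundamental bond of b with respect to B in M: bo_{M/C}(b, B∖(C∖{e})) = bo_M(b, B). Consequently, b is internally active in B (with respect to M) if and only if b is internally active in B∖(C∖{e}) (with respect to M/C). -/

import Mathlib

/-- A circuit of a matroid: a minimal dependent subset of the ground set. -/
def Matroid.IsCircuit' {α : Type*} (M : Matroid α) (C : Set α) : Prop :=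
  C ⊆ M.E ∧ ¬ M.Indep C ∧ ∀ D ⊂ C, M.Indep D

/-- The contraction `M/C` of a matroid, defined as the dual of the
restriction of the dual to the complement of `C`. -/
noncomputable def Matroid.contract' {α : Type*} (M : Matroid α) (C : Set α) :
    Matroid α :=
  ((M✶).restrict (M.E \ C))✶

/-- `D` is the fundamental bond `bo_M(b,B)` of `b ∈ B` with respect to the base
`B`: the (unique) cocircuit of `M` contained in `(E∖B) ∪ {b}`. -/
def Matroid.IsBond {α : Type*} (M : Matroid α) (b : α) (B : Set α)
    (D : Set α) : Prop :=
  (M✶).IsCircuit' D ∧ b ∈ D ∧ D ⊆ insert b (M.E \ B)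

/-- `b` is internally active in the base `B` of `M` (with respect to a linear
order on the ground set): `b` is the minimum element of its fundamental bond. -/
def Matroid.InternallyActive {α : Type*} [LinearOrder α] (M : Matroid α)
    (b : α) (B : Set α) : Prop :=
  ∀ D : Set α, M.IsBond b B D → ∀ x ∈ D, b ≤ x

/-- A circuit and a cocircuit cannot meet in exactly one element. -/
lemma circuit_inter_cocircuit_ne_singleton {α : Type*} (M : Matroid α)
    {C D : Set α} (hC : M.IsCircuit' C) (hD : (M✶).IsCircuit' D)
    {e : α} (heC : e ∈ C) (heD : e ∈ D) (hsub : C ∩ D ⊆ {e}) : False := by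
  obtain ⟨hCE, hCdep, hCmin⟩ := hC
  obtain ⟨hDE, hDdep, hDmin⟩ := hD
  -- D \ {e} is independent in M✶ : there is a base B₀ of M disjoint from D \ {e}
  have hDe : (M✶).Indep (D \ {e}) := hDmin _ (Set.sdiff_singleton_ssubset.mpr heD)
  obtain ⟨-, B₀, hB₀, hdisj⟩ := (Matroid.dual_indep_iff_exists').1 hDe
  -- C \ {e} is independent in M
  have hCe : M.Indep (C \ {e}) := hCmin _ (Set.sdiff_singleton_ssubset.mpr heC)
  obtain ⟨B₁, hB₁, hCB₁, hB₁sub⟩ := hCe.exists_isBase_subset_union_isBase hB₀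
  -- B₁ ∩ D ⊆ {e}
  have hB₁D : B₁ ∩ D ⊆ {e} := by
    rintro x ⟨hx₁, hxD⟩
    rcases hB₁sub hx₁ with hx | hx
    · exact hsub ⟨hx.1, hxD⟩
    · by_contra hne
      exact hdisj.ne_of_mem ⟨hxD, hne⟩ hx rfl
  -- every base of M meets D, since D is dependent in M✶
  have heB₁ : e ∈ B₁ := by
    by_contra heB₁
    apply hDdep
    rw [Matroid.dual_indep_iff_exists']
    refine ⟨hDE, B₁, hB₁, Set.disjoint_left.mpr fun x hxD hxB₁ => ?_⟩
    have := hB₁D ⟨hxB₁, hxD⟩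
    exact heB₁ (this ▸ hxB₁)
  -- then C ⊆ B₁, contradicting dependence of C
  apply hCdep
  refine hB₁.indep.subset fun x hx => ?_
  by_cases hxe : x = e
  · exact hxe ▸ heB₁
  · exact hCB₁ ⟨hx, hxe⟩

lemma restrict_isCircuit' {α : Type*} (M : Matroid α) {R D : Set α}
    (hR : R ⊆ M.E) : (M.restrict R).IsCircuit' D ↔ M.IsCircuit' D ∧ D ⊆ R := by
  constructor
  · rintro ⟨hDR, hdep, hmin⟩
    rw [Matroid.restrict_ground_eq] at hDR
    refine ⟨⟨hDR.trans hR, fun h => hdep (Matroid.restrict_indep_iff.mpr ⟨h, hDR⟩),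
      fun D' hD' => (Matroid.restrict_indep_iff.1 (hmin D' hD')).1⟩, hDR⟩
  · rintro ⟨⟨hDE, hdep, hmin⟩, hDR⟩
    refine ⟨by rwa [Matroid.restrict_ground_eq],
      fun h => hdep (Matroid.restrict_indep_iff.1 h).1,
      fun D' hD' => Matroid.restrict_indep_iff.mpr
        ⟨hmin D' hD', hD'.subset.trans hDR⟩⟩

/-- **Fundamental bonds survive contraction of the fundamental circuit.**
Let `M` be a matroid on a linearly ordered ground set, `B` a base, `e ∉ B` a
non-loop element, and `C = ci(e,B)` the fundamental circuit (the unique circuit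
in `B ∪ {e}`).  Then for every `b ∈ B∖(C∖{e})`, the fundamental bond of `b`
with respect to the base `B∖(C∖{e})` of the contraction `M/C` equals the
fundamental bond of `b` with respect to `B` in `M`:
`bo_{M/C}(b, B∖(C∖{e})) = bo_M(b, B)`.  Consequently `b` is internally active
in `B` (w.r.t. `M`) iff `b` is internally active in `B∖(C∖{e})` (w.r.t. `M/C`). -/
theorem bond_contract_fundCircuit {α : Type*} [LinearOrder α]
    (M : Matroid α) (e : α)
    (heE : e ∈ M.E) (heNonloop : e ∉ M.closure ∅)
    (B : Set α) (hB : M.IsBase B) (heB : e ∉ B)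
    (C : Set α) (hC : M.IsCircuit' C) (heC : e ∈ C) (hCB : C ⊆ insert e B)
    (b : α) (hb : b ∈ B \ (C \ {e})) :
    (∀ D : Set α,
        (M.contract' C).IsBond b (B \ (C \ {e})) D ↔ M.IsBond b B D) ∧
    (M.InternallyActive b B ↔
        (M.contract' C).InternallyActive b (B \ (C \ {e}))) := by
  obtain ⟨hbB, hbC'⟩ := hb
  have hbe : b ≠ e := fun h => heB (h ▸ hbB)
  have hbC : b ∉ C := fun h => hbC' ⟨h, hbe⟩
  have hRE : M.E \ C ⊆ (M✶).E := Set.diff_subset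
  have hgnd : (M.contract' C).E = M.E \ C := rfl
  have hdual : (M.contract' C)✶ = (M✶).restrict (M.E \ C) := by
    rw [Matroid.contract', Matroid.dual_dual]
  have key : ∀ D : Set α,
      (M.contract' C).IsBond b (B \ (C \ {e})) D ↔ M.IsBond b B D := by
    intro D
    constructor
    · rintro ⟨hcirc, hbD, hDsub⟩
      rw [hdual, restrict_isCircuit' _ hRE] at hcirc
      refine ⟨hcirc.1, hbD, fun x hxD => ?_⟩
      rcases hDsub hxD with hx | hx
      · exact Set.mem_insert_iff.mpr (Or.inl hx)
      · rw [hgnd] at hx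
        obtain ⟨⟨hxE, hxC⟩, hxB'⟩ := hx
        refine Set.mem_insert_iff.mpr (Or.inr ⟨hxE, fun hxB => hxB' ⟨hxB, ?_⟩⟩)
        exact fun hxCe => hxC hxCe.1
    · rintro ⟨hcirc, hbD, hDsub⟩
      -- first show C ∩ D ⊆ {e}
      have hCD : C ∩ D ⊆ {e} := by
        rintro x ⟨hxC, hxD⟩
        rcases hDsub hxD with hx | hx
        · exact absurd (hx ▸ hxC) hbC
        · rcases hCB hxC with h | h
          · exact h
          · exact absurd h hx.2
      -- e ∉ D, else circuit and cocircuit meet in exactly {e}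
      have heD : e ∉ D := fun heD =>
        circuit_inter_cocircuit_ne_singleton M hC hcirc heC heD hCD
      have hDC : ∀ x ∈ D, x ∉ C := fun x hxD hxC =>
        heD ((hCD ⟨hxC, hxD⟩) ▸ hxD)
      refine ⟨?_, hbD, ?_⟩
      · rw [hdual, restrict_isCircuit' _ hRE]
        exact ⟨hcirc, fun x hx => ⟨hcirc.1 hx, hDC x hx⟩⟩
      · intro x hxD
        rcases hDsub hxD with hx | hx
        · exact Set.mem_insert_iff.mpr (Or.inl hx)
        · refine Set.mem_insert_iff.mpr (Or.inr ?_)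
          rw [hgnd]
          exact ⟨⟨hx.1, hDC x hxD⟩, fun h => hx.2 h.1⟩
  refine ⟨key, ?_⟩
  constructor
  · intro h D hD
    exact h D ((key D).1 hD)
  · intro h D hD
    exact h D ((key D).2 hD)
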